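/- For any categorical distribution θ on a finite nonempty set X and any α₀ ∈ ℝ, the function α ↦ D(T(θ,α)||θ) is differentiable at α₀ with derivative (α₀−1)·V(T(θ,α₀)||θ). -/

import Mathlib

open Real BigOperators
open scoped Classical

variable {X : Type*}

/-- A categorical distribution on a finite set: positive everywhere and sums to 1. -/
def IsCatDist [Fintype X] (θ : X → ℝ) : Prop :=
  (∀ x, 0 < θ x) ∧ ∑ x, θ x = 1

/-- The tilt of order `α` of a categorical distribution. -/
noncomputable def tilt [Fintype X] (θ : X → ℝ) (α : ℝ) : X → ℝ :=
  fun x => θ x ^ α / ∑ y, θ y ^ α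

/-- Shannon entropy (natural log). -/
noncomputable def shannonEntropy [Fintype X] (ρ : X → ℝ) : ℝ :=
  ∑ x, ρ x * Real.log (1 / ρ x)

/-- Cross entropy `H(ρ‖θ)`. -/
noncomputable def crossEntropy [Fintype X] (ρ θ : X → ℝ) : ℝ :=
  ∑ x, ρ x * Real.log (1 / θ x)

/-- Relative entropy (KL divergence) `D(ρ‖θ)`. -/
noncomputable def relEntropy [Fintype X] (ρ θ : X → ℝ) : ℝ :=
  ∑ x, ρ x * Real.log (ρ x / θ x)

/-- Rényi entropy of order `α`. -/
noncomputable def renyiEntropy [Fintype X] (θ : X → ℝ) (α : ℝ) : ℝ :=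
  (1 / (1 - α)) * Real.log (∑ x, θ x ^ α)

/-- Varentropy. -/
noncomputable def varentropy [Fintype X] (ρ : X → ℝ) : ℝ :=
  ∑ x, ρ x * (Real.log (1 / ρ x) - shannonEntropy ρ) ^ 2

/-- Cross varentropy. -/
noncomputable def crossVarentropy [Fintype X] (ρ θ : X → ℝ) : ℝ :=
  ∑ x, ρ x * (Real.log (1 / θ x) - crossEntropy ρ θ) ^ 2

/-- Probability of an `n`-string under the i.i.d. extension of `θ`. -/
noncomputable def strProb (θ : X → ℝ) {n : ℕ} (x : Fin n → X) : ℝ := ∏ i, θ (x i)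

/-- Probability of a set of `n`-strings. -/
noncomputable def setProb [Fintype X] (θ : X → ℝ) {n : ℕ} (S : Finset (Fin n → X)) : ℝ :=
  ∑ x ∈ S, strProb θ x

/-- `θ` has a unique maximizer and a unique minimizer. -/
def UniqueExtremizers [Fintype X] (θ : X → ℝ) : Prop :=
  (∃! x : X, ∀ y, θ y ≤ θ x) ∧ (∃! x : X, ∀ y, θ x ≤ θ y)

/-- Tilted weakly typical set of order `α`. -/
noncomputable def typicalSetA [Fintype X] (θ : X → ℝ) (α : ℝ) (n : ℕ) (ε : ℝ) :
    Finset (Fin n → X) :=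
  Finset.univ.filter (fun x =>
    Real.exp (-(n : ℝ) * crossEntropy (tilt θ α) θ - n * ε) < strProb θ x ∧
    strProb θ x < Real.exp (-(n : ℝ) * crossEntropy (tilt θ α) θ + n * ε))

/-- The set `D^n_{θ,α,ε}`. -/
noncomputable def setD [Fintype X] (θ : X → ℝ) (α : ℝ) (n : ℕ) (ε : ℝ) :
    Finset (Fin n → X) :=
  Finset.univ.filter (fun x =>
    strProb (tilt θ α) x > Real.exp (-(n : ℝ) * shannonEntropy (tilt θ α) - n * |α| * ε))

/-- The set `E^n_{θ,α,ε}`. -/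
noncomputable def setE [Fintype X] (θ : X → ℝ) (α : ℝ) (n : ℕ) (ε : ℝ) :
    Finset (Fin n → X) :=
  Finset.univ.filter (fun x =>
    strProb (tilt θ α) x < Real.exp (-(n : ℝ) * shannonEntropy (tilt θ α) + n * |α| * ε))

/-- A guesswork function for `θ` on `n`-strings: a bijection onto `{1,…,|X|^n}`
that orders strings from most likely to least likely. -/
def IsGuesswork [Fintype X] (θ : X → ℝ) {n : ℕ} (G : (Fin n → X) → ℕ) : Prop :=
  Function.Injective G ∧
  (∀ x, G x ∈ Finset.Icc 1 (Fintype.card X ^ n)) ∧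
  (∀ m ∈ Finset.Icc 1 (Fintype.card X ^ n), ∃ x, G x = m) ∧
  (∀ x y, strProb θ x > strProb θ y → G x < G y)

lemma crossVarentropy_eq_moment [Fintype X] (ρ θ : X → ℝ) (hρ : ∑ x, ρ x = 1) :
    crossVarentropy ρ θ
      = (∑ x, ρ x * Real.log (1 / θ x) ^ 2) - crossEntropy ρ θ ^ 2 := by
  unfold crossVarentropy crossEntropy
  set C := ∑ x, ρ x * Real.log (1 / θ x) with hC
  have hterm : ∀ x, ρ x * (Real.log (1 / θ x) - C) ^ 2
      = ρ x * Real.log (1 / θ x) ^ 2 - 2 * C * (ρ x * Real.log (1 / θ x)) + C ^ 2 * ρ x := by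
    intro x; ring
  rw [Finset.sum_congr rfl fun x _ => hterm x, Finset.sum_add_distrib,
    Finset.sum_sub_distrib, ← Finset.mul_sum, ← Finset.mul_sum, hρ, ← hC]
  ring

theorem hasDerivAt_relEntropy_tilt [Fintype X] [Nonempty X] (θ : X → ℝ)
    (hθ : IsCatDist θ) (α₀ : ℝ) :
    HasDerivAt (fun α : ℝ => relEntropy (tilt θ α) θ)
      ((α₀ - 1) * crossVarentropy (tilt θ α₀) θ) α₀ := by
  obtain ⟨hpos, hsum⟩ := hθ
  set f : ℝ → ℝ := fun α => ∑ x, θ x ^ α with hf_def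
  set g : ℝ → ℝ := fun α => ∑ x, θ x ^ α * Real.log (θ x) with hg_def
  set h : ℝ → ℝ := fun α => ∑ x, θ x ^ α * Real.log (θ x) ^ 2 with hh_def
  have hfpos : ∀ α, 0 < f α := fun α =>
    Finset.sum_pos (fun x _ => Real.rpow_pos_of_pos (hpos x) α) Finset.univ_nonempty
  have hb : ∀ (x : X) (α : ℝ),
      HasDerivAt (fun a : ℝ => θ x ^ a) (θ x ^ α * Real.log (θ x)) α := by
    intro x α
    have h1 : (fun a : ℝ => θ x ^ a) = fun a => Real.exp (Real.log (θ x) * a) := by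
      funext a; rw [Real.rpow_def_of_pos (hpos x)]
    rw [h1]
    have := ((hasDerivAt_id α).const_mul (Real.log (θ x))).exp
    simpa [Real.rpow_def_of_pos (hpos x), mul_comm] using this
  have hfd : ∀ α, HasDerivAt f (g α) α := fun α =>
    HasDerivAt.fun_sum (fun x _ => hb x α)
  have hgd : ∀ α, HasDerivAt g (h α) α := by
    intro α
    apply HasDerivAt.fun_sum
    intro x _
    simpa [sq, mul_assoc] using (hb x α).mul_const (Real.log (θ x))
  -- rewrite relEntropy
  have key : ∀ α, relEntropy (tilt θ α) θ = (α - 1) * (g α / f α) - Real.log (f α) := by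
    intro α
    have hne : f α ≠ 0 := (hfpos α).ne'
    unfold relEntropy tilt
    have hterm : ∀ x, θ x ^ α / f α * Real.log (θ x ^ α / f α / θ x)
        = (α - 1) * (θ x ^ α * Real.log (θ x) / f α) - θ x ^ α / f α * Real.log (f α) := by
      intro x
      rw [Real.log_div (div_pos (Real.rpow_pos_of_pos (hpos x) α) (hfpos α)).ne'
          (hpos x).ne',
        Real.log_div (Real.rpow_pos_of_pos (hpos x) α).ne' hne, Real.log_rpow (hpos x)]
      ring
    rw [Finset.sum_congr rfl fun x _ => hterm x, Finset.sum_sub_distrib]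
    congr 1
    · rw [← Finset.mul_sum, ← Finset.sum_div]
    · rw [← Finset.sum_mul, ← Finset.sum_div, div_self hne, one_mul]
  -- tilt sums to 1
  have htsum : ∀ α, ∑ x, tilt θ α x = 1 := by
    intro α
    unfold tilt
    rw [← Finset.sum_div, div_self (hfpos α).ne']
  -- cross entropy and varentropy at α₀
  have hCE : crossEntropy (tilt θ α₀) θ = -(g α₀ / f α₀) := by
    unfold crossEntropy tilt
    have : ∀ x, θ x ^ α₀ / f α₀ * Real.log (1 / θ x)
        = -(θ x ^ α₀ * Real.log (θ x) / f α₀) := by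
      intro x
      rw [one_div, Real.log_inv]
      ring
    rw [Finset.sum_congr rfl fun x _ => this x, Finset.sum_neg_distrib,
      ← Finset.sum_div]
  have hM2 : ∑ x, tilt θ α₀ x * Real.log (1 / θ x) ^ 2 = h α₀ / f α₀ := by
    unfold tilt
    have : ∀ x, θ x ^ α₀ / f α₀ * Real.log (1 / θ x) ^ 2
        = θ x ^ α₀ * Real.log (θ x) ^ 2 / f α₀ := by
      intro x
      rw [one_div, Real.log_inv]
      ring
    rw [Finset.sum_congr rfl fun x _ => this x, ← Finset.sum_div]
  have hV : crossVarentropy (tilt θ α₀) θ = h α₀ / f α₀ - (g α₀ / f α₀) ^ 2 := by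
    rw [crossVarentropy_eq_moment _ _ (htsum α₀), hCE, hM2]
    ring
  -- differentiate
  have hne : f α₀ ≠ 0 := (hfpos α₀).ne'
  have hq : HasDerivAt (fun α => g α / f α)
      ((h α₀ * f α₀ - g α₀ * g α₀) / f α₀ ^ 2) α₀ := (hgd α₀).div (hfd α₀) hne
  have hlog : HasDerivAt (fun α => Real.log (f α)) (g α₀ / f α₀) α₀ :=
    (hfd α₀).log hne
  have h1 : HasDerivAt (fun α => (α - 1) * (g α / f α))
      (1 * (g α₀ / f α₀) + (α₀ - 1) * ((h α₀ * f α₀ - g α₀ * g α₀) / f α₀ ^ 2)) α₀ :=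
    ((hasDerivAt_id α₀).sub_const 1).mul hq
  have hF := h1.fun_sub hlog
  have hfun : (fun α : ℝ => relEntropy (tilt θ α) θ)
      = fun α => (α - 1) * (g α / f α) - Real.log (f α) := funext key
  rw [hfun]
  refine hF.congr_deriv ?_
  rw [hV]
  field_simp
  ring
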